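/- Let v = (v₁, v₂) ∈ ℤ≥0² with v₁ ≤ v₂, v₂ ≥ 2, n ≥ 2, and v₁² + v₂² - n·v₁·v₂ = 1. Set w = (n·v₁ - v₂, v₁). Then w ∈ ℤ≥0², w₁ ≤ w₂, w₂ < v₂, and w₁² + w₂² - n·w₁·w₂ = 1. -/
import Mathlib


/-- Descent step for positive roots of the Tits form of the `n`-Kronecker quiver. -/
theorem stmt_2 (n v₁ v₂ : ℤ) (hn : 2 ≤ n) (h₁ : 0 ≤ v₁) (h₂ : 0 ≤ v₂)
    (hle : v₁ ≤ v₂) (h2le : 2 ≤ v₂)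
    (hq : v₁ ^ 2 + v₂ ^ 2 - n * v₁ * v₂ = 1) :
    0 ≤ n * v₁ - v₂ ∧ 0 ≤ v₁ ∧ n * v₁ - v₂ ≤ v₁ ∧ v₁ < v₂ ∧
      (n * v₁ - v₂) ^ 2 + v₁ ^ 2 - n * (n * v₁ - v₂) * v₁ = 1 := by
  have hv1 : 1 ≤ v₁ := by
    by_contra h
    have : v₁ = 0 := by omega
    subst this; nlinarith
  have hlt : v₁ < v₂ := by
    rcases lt_or_eq_of_le hle with h | h
    · exact h
    · exfalso; subst h; nlinarith [mul_nonneg (sub_nonneg.2 hn) (sq_nonneg v₁)]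
  have key : v₂ * (n * v₁ - v₂) = v₁ ^ 2 - 1 := by ring_nf; nlinarith [hq]
  have h0 : 0 ≤ n * v₁ - v₂ := by nlinarith
  have h3 : n * v₁ - v₂ ≤ v₁ := by nlinarith
  exact ⟨h0, h₁, h3, hlt, by nlinarith⟩
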